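/- For any self-adjoint Hilbert–Schmidt operator Q on a Hilbert space ℌ and any orthogonal projector P⁰ on ℌ, if 0 ≤ Q + P⁰ ≤ 1 then Q² ≤ Q⁺⁺ − Q⁻⁻, where Q⁺⁺ = (1−P⁰)Q(1−P⁰) and Q⁻⁻ = P⁰QP⁰. -/

import Mathlib

open ContinuousLinearMap

/-- `Q` is a Hilbert–Schmidt operator: `∑ ‖Q e i‖²` is finite for some
(equivalently, any) Hilbert basis. -/
def IsHilbertSchmidt {H : Type*} [NormedAddCommGroup H] [InnerProductSpace ℂ H]
    [CompleteSpace H] (Q : H →L[ℂ] H) : Prop :=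
  ∃ (ι : Type) (b : HilbertBasis ι ℂ H), Summable fun i => ‖Q (b i)‖ ^ 2

set_option synthInstance.maxHeartbeats 800000 in
theorem stmt_2 {H : Type*} [NormedAddCommGroup H] [InnerProductSpace ℂ H] [CompleteSpace H]
    (Q P0 : H →L[ℂ] H) (hQsa : IsSelfAdjoint Q) (hQhs : IsHilbertSchmidt Q)
    (hP0 : IsIdempotentElem P0) (hP0sa : IsSelfAdjoint P0)
    (hpos : (Q + P0).IsPositive) (hle : (1 - (Q + P0)).IsPositive) :
    ((1 - P0) * Q * (1 - P0) - P0 * Q * P0 - Q * Q).IsPositive := by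
  set A := Q + P0 with hA
  have key : (1 - P0) * Q * (1 - P0) - P0 * Q * P0 - Q * Q = A - A * A := by
    have h : P0 * P0 = P0 := hP0.eq
    rw [hA]
    simp only [mul_sub, sub_mul, one_mul, mul_one, mul_add, add_mul, h]
    abel
  rw [key]
  rw [← nonneg_iff_isPositive] at hpos hle ⊢
  obtain ⟨s, hssa, hs⟩ : ∃ s, IsSelfAdjoint s ∧ s * s = A :=
    ⟨CFC.sqrt A, IsSelfAdjoint.of_nonneg (CFC.sqrt_nonneg A), CFC.sqrt_mul_sqrt_self A hpos⟩
  have : A - A * A = s * (1 - A) * star s := by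
    rw [hssa.star_eq, mul_sub, mul_one, sub_mul, hs]
    congr 1
    rw [← hs]
    noncomm_ring
  rw [this]
  exact star_right_conjugate_nonneg hle _
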